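/- Let L₁ be the 3-dimensional complex ω-Lie algebra with basis {x,y,z}, brackets [x,y]=y, [x,z]=0, [y,z]=z, and ω(x,y)=1, ω(x,z)=ω(y,z)=0. Then a linear map f on L₁ is a generalized derivation of L₁ if and only if its matrix in the basis {x,y,z} has the form with (2,1) entry and (2,3) entry equal to zero; in particular, GDer(L₁) is a 7-dimensional subspace of gl(L₁), hence GDer(L₁) ≠ gl(L₁). -/

import Mathlib

/-- Bracket of the ω-Lie algebra \`L₁\`: basis \`x = e 0, y = e 1, z = e 2\`,
\`[x,y] = y\`, \`[x,z] = 0\`, \`[y,z] = z\`, extended bilinearly. -/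
def br1 (u v : Fin 3 → ℂ) : Fin 3 → ℂ :=
  ![0, u 0 * v 1 - u 1 * v 0, u 1 * v 2 - u 2 * v 1]

/-- The form ω of \`L₁\`: \`ω(x,y) = 1\`, \`ω(x,z) = ω(y,z) = 0\`, skew-symmetric bilinear. -/
def om1 (u v : Fin 3 → ℂ) : ℂ := u 0 * v 1 - u 1 * v 0

/-- \`f\` (as a matrix in the basis \`x,y,z\`) is a generalized derivation of \`L₁\`. -/
def IsGDer1 (f : Matrix (Fin 3) (Fin 3) ℂ) : Prop :=
  ∃ f₁ f₂ : Matrix (Fin 3) (Fin 3) ℂ, ∀ u v : Fin 3 → ℂ,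
    br1 (f.mulVec u) v = f₂.mulVec (br1 u v) - br1 u (f₁.mulVec v)

lemma gder_iff (f : Matrix (Fin 3) (Fin 3) ℂ) : IsGDer1 f ↔ (f 1 0 = 0 ∧ f 1 2 = 0) := by
  constructor
  · rintro ⟨f₁, f₂, hf⟩
    have h12 := congr_fun (hf ![0,0,1] ![1,0,0]) 1
    have hA := congr_fun (hf ![1,0,0] ![1,0,0]) 1
    have hB := congr_fun (hf ![0,0,1] ![1,0,0]) 2
    simp [br1, Matrix.mulVec, dotProduct, Fin.sum_univ_three] at h12 hA hB
    exact ⟨hA.trans hB.symm, h12⟩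
  · rintro ⟨h10, h12⟩
    refine ⟨![![f 0 0 - f 1 1, f 0 1, f 0 2], ![0, 0, 0], ![f 2 0, f 2 1, f 2 2 - f 1 1]],
            ![![0, 0, 0], ![0, f 0 0, -(f 0 2)], ![0, -(f 2 0), f 2 2]], ?_⟩
    intro u v
    funext i
    fin_cases i <;>
      simp [br1, Matrix.mulVec, dotProduct, Fin.sum_univ_three, h10, h12] <;> ring

theorem stmt14 :
    (∀ f : Matrix (Fin 3) (Fin 3) ℂ, IsGDer1 f ↔ (f 1 0 = 0 ∧ f 1 2 = 0)) ∧
    (∃ S : Submodule ℂ (Matrix (Fin 3) (Fin 3) ℂ),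
      (S : Set (Matrix (Fin 3) (Fin 3) ℂ)) = {f | IsGDer1 f} ∧ Module.finrank ℂ S = 7) ∧
    (∃ f : Matrix (Fin 3) (Fin 3) ℂ, ¬ IsGDer1 f) := by
  refine ⟨gder_iff, ?_, ?_⟩
  · set φ : Matrix (Fin 3) (Fin 3) ℂ →ₗ[ℂ] ℂ × ℂ :=
      { toFun := fun f => (f 1 0, f 1 2)
        map_add' := fun _ _ => rfl
        map_smul' := fun _ _ => rfl } with hφ
    refine ⟨LinearMap.ker φ, ?_, ?_⟩
    · ext f
      simp only [SetLike.mem_coe, LinearMap.mem_ker, Set.mem_setOf_eq, gder_iff, hφ,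
        LinearMap.coe_mk, AddHom.coe_mk, Prod.mk_eq_zero]
      exact Prod.mk_eq_zero
    · have hsurj : Function.Surjective φ := by
        rintro ⟨a, b⟩
        refine ⟨![![0,0,0], ![a,0,b], ![0,0,0]], ?_⟩
        simp [hφ]
        rfl
      have := LinearMap.finrank_range_add_finrank_ker φ
      rw [LinearMap.range_eq_top.mpr hsurj] at this
      simp only [finrank_top] at this
      have h9 : Module.finrank ℂ (Matrix (Fin 3) (Fin 3) ℂ) = 9 := by
        simp [Module.finrank_matrix]
      have h2 : Module.finrank ℂ (ℂ × ℂ) = 2 := by simp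
      omega
  · refine ⟨Matrix.of fun _ _ => 1, ?_⟩
    rw [gder_iff]
    simp
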